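/- For every real number t ∈ [−1,1] and every real α ≥ log 3, the expression e^{−αt/2}·t·(2+t) − e^{αt/2}·t·(2−t) is nonpositive. -/
import Mathlib

open Real Set Filter

private noncomputable def ell1F : ℝ → ℝ := fun t => Real.log (2 + t) - Real.log (2 - t)

private lemma ell1F_hasDerivAt {x : ℝ} (hx : x ∈ Set.Ioo (-2 : ℝ) 2) :
    HasDerivAt ell1F ((2 + x)⁻¹ + (2 - x)⁻¹) x := by
  have h1 : (0:ℝ) < 2 + x := by linarith [hx.1]
  have h2 : (0:ℝ) < 2 - x := by linarith [hx.2]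
  have d1 : HasDerivAt (fun t : ℝ => Real.log (2 + t)) (1 / (2 + x)) x := by
    have := ((hasDerivAt_id x).const_add 2).log h1.ne'
    simpa using this
  have d2 : HasDerivAt (fun t : ℝ => Real.log (2 - t)) ((-1) / (2 - x)) x := by
    have : HasDerivAt (fun t : ℝ => 2 - t) (-1) x := by
      simpa using ((hasDerivAt_id x).const_sub 2)
    exact this.log h2.ne'
  have := d1.sub d2
  have heq : 1 / (2 + x) - (-1) / (2 - x) = (2 + x)⁻¹ + (2 - x)⁻¹ := by
    field_simp
    ring
  rw [heq] at this
  exact this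

private noncomputable def ell1G : ℝ → ℝ := fun t => (2 + t)⁻¹ + (2 - t)⁻¹

private lemma ell1G_hasDerivAt {x : ℝ} (hx : x ∈ Set.Ioo (-2 : ℝ) 2) :
    HasDerivAt ell1G (-((2 + x)^2)⁻¹ + ((2 - x)^2)⁻¹) x := by
  have h1 : (0:ℝ) < 2 + x := by linarith [hx.1]
  have h2 : (0:ℝ) < 2 - x := by linarith [hx.2]
  have e1 : HasDerivAt (fun t : ℝ => 2 + t) 1 x := by
    simpa using (hasDerivAt_id x).const_add 2
  have e2 : HasDerivAt (fun t : ℝ => 2 - t) (-1) x := by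
    simpa using (hasDerivAt_id x).const_sub 2
  have d1 : HasDerivAt (fun t : ℝ => (2 + t)⁻¹) (-1 / (2 + x)^2) x := e1.inv h1.ne'
  have d2 : HasDerivAt (fun t : ℝ => (2 - t)⁻¹) (-(-1) / (2 - x)^2) x := e2.inv h2.ne'
  have := d1.add d2
  have heq : -1 / (2 + x)^2 + -(-1) / (2 - x)^2 = -((2 + x)^2)⁻¹ + ((2 - x)^2)⁻¹ := by
    field_simp
  rwa [heq] at this

private lemma ell1_deriv_eq : ∀ x ∈ Set.Ioo (-2 : ℝ) 2, deriv ell1F x = ell1G x :=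
  fun x hx => (ell1F_hasDerivAt hx).deriv

private lemma ell1_convex : ConvexOn ℝ (Set.Icc (0:ℝ) 1) ell1F := by
  have hsub : Set.Icc (0:ℝ) 1 ⊆ Set.Ioo (-2 : ℝ) 2 := fun x hx => ⟨by linarith [hx.1], by linarith [hx.2]⟩
  have hint : interior (Set.Icc (0:ℝ) 1) = Set.Ioo (0:ℝ) 1 := interior_Icc
  have hopen : IsOpen (Set.Ioo (-2:ℝ) 2) := isOpen_Ioo
  have hderiv_eventually : ∀ x ∈ Set.Ioo (-2:ℝ) 2, deriv ell1F =ᶠ[nhds x] ell1G := by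
    intro x hx
    filter_upwards [hopen.mem_nhds hx] with y hy using ell1_deriv_eq y hy
  apply convexOn_of_deriv2_nonneg (convex_Icc 0 1)
  · intro x hx
    exact ((ell1F_hasDerivAt (hsub hx)).continuousAt).continuousWithinAt
  · intro x hx
    rw [hint] at hx
    have hx2 : x ∈ Set.Ioo (-2:ℝ) 2 := ⟨by linarith [hx.1], by linarith [hx.2]⟩
    exact ((ell1F_hasDerivAt hx2).differentiableAt).differentiableWithinAt
  · intro x hx
    rw [hint] at hx
    have hx2 : x ∈ Set.Ioo (-2:ℝ) 2 := ⟨by linarith [hx.1], by linarith [hx.2]⟩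
    have : HasDerivAt (deriv ell1F) (-((2 + x)^2)⁻¹ + ((2 - x)^2)⁻¹) x :=
      (ell1G_hasDerivAt hx2).congr_of_eventuallyEq (hderiv_eventually x hx2)
    exact this.differentiableAt.differentiableWithinAt
  · intro x hx
    rw [hint] at hx
    have hx2 : x ∈ Set.Ioo (-2:ℝ) 2 := ⟨by linarith [hx.1], by linarith [hx.2]⟩
    have hD : HasDerivAt (deriv ell1F) (-((2 + x)^2)⁻¹ + ((2 - x)^2)⁻¹) x :=
      (ell1G_hasDerivAt hx2).congr_of_eventuallyEq (hderiv_eventually x hx2)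
    have : deriv^[2] ell1F x = -((2 + x)^2)⁻¹ + ((2 - x)^2)⁻¹ := by
      simp only [Function.iterate_succ, Function.iterate_zero, Function.comp_apply, id_eq]
      exact hD.deriv
    rw [this]
    have h1 : (0:ℝ) < 2 + x := by linarith [hx.1]
    have h2 : (0:ℝ) < 2 - x := by linarith [hx.2]
    have hle : (2 - x)^2 ≤ (2 + x)^2 := by nlinarith [hx.1]
    have := inv_anti₀ (by positivity) hle
    linarith

private lemma ell1_log_bound {t : ℝ} (ht : t ∈ Set.Icc (0:ℝ) 1) :
    Real.log (2 + t) - Real.log (2 - t) ≤ t * Real.log 3 := by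
  obtain ⟨h0, h1⟩ := ht
  have key := ell1_convex.2 (Set.left_mem_Icc.mpr (by norm_num))
    (Set.right_mem_Icc.mpr (by norm_num)) (by linarith : (0:ℝ) ≤ 1 - t) h0 (by ring)
  simp only [smul_eq_mul, mul_zero, mul_one, zero_add] at key
  have hF0 : ell1F 0 = 0 := by simp [ell1F]
  have hF1 : ell1F 1 = Real.log 3 := by norm_num [ell1F]
  rw [hF0, hF1] at key
  simpa [ell1F] using key

private lemma ell1_key (t α : ℝ) (ht : t ∈ Set.Icc (0:ℝ) 1) (hα : Real.log 3 ≤ α) :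
    Real.exp (-(α * t) / 2) * t * (2 + t) - Real.exp (α * t / 2) * t * (2 - t) ≤ 0 := by
  obtain ⟨h0, h1⟩ := ht
  have h2t : (0:ℝ) < 2 - t := by linarith
  have h2t' : (0:ℝ) < 2 + t := by linarith
  have hlog : Real.log (2 + t) - Real.log (2 - t) ≤ t * Real.log 3 := ell1_log_bound ⟨h0, h1⟩
  have hαt : Real.log (2 + t) ≤ α * t + Real.log (2 - t) := by
    have : t * Real.log 3 ≤ t * α := mul_le_mul_of_nonneg_left hα h0
    linarith [mul_comm t α]
  have hmain : 2 + t ≤ (2 - t) * Real.exp (α * t) := by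
    have := Real.exp_le_exp.mpr hαt
    rwa [Real.exp_log h2t', Real.exp_add, Real.exp_log h2t, mul_comm] at this
  have hineq : (2 + t) * Real.exp (-(α * t) / 2) ≤ (2 - t) * Real.exp (α * t / 2) := by
    have hpos : (0:ℝ) < Real.exp (-(α * t) / 2) := Real.exp_pos _
    have := mul_le_mul_of_nonneg_right hmain hpos.le
    have heq : (2 - t) * Real.exp (α * t) * Real.exp (-(α * t) / 2)
        = (2 - t) * Real.exp (α * t / 2) := by
      rw [mul_assoc, ← Real.exp_add]
      ring_nf
    linarith [heq ▸ this]
  nlinarith [mul_le_mul_of_nonneg_left hineq h0, Real.exp_pos (-(α * t) / 2),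
    Real.exp_pos (α * t / 2)]

theorem ell1_expr_nonpos (t α : ℝ) (ht : t ∈ Set.Icc (-1 : ℝ) 1) (hα : Real.log 3 ≤ α) :
    Real.exp (-(α * t) / 2) * t * (2 + t) - Real.exp (α * t / 2) * t * (2 - t) ≤ 0 := by
  obtain ⟨h1, h2⟩ := ht
  rcases le_or_gt 0 t with hpos | hneg
  · exact ell1_key t α ⟨hpos, h2⟩ hα
  · have key := ell1_key (-t) α ⟨by linarith, by linarith⟩ hα
    have e1 : -(α * -t) / 2 = α * t / 2 := by ring
    have e2 : α * -t / 2 = -(α * t) / 2 := by ring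
    rw [e1, e2] at key
    nlinarith [key]
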